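/- For every S ∈ Sym₃,σ(ℝ), the pair (Φ₀, P₀) solves the homogeneous Stokes equations on ℝ³∖{0}: for every x ≠ 0, ΔΦ₀(x) = ∇P₀(x) (componentwise) and div Φ₀(x) = 0. -/

import Mathlib

noncomputable section
open MeasureTheory Metric Real Filter

/-- Three-dimensional Euclidean space. -/
abbrev E3 : Type := EuclideanSpace ℝ (Fin 3)

/-- The `i`-th standard basis vector of `ℝ³`. -/
def e3 (i : Fin 3) : E3 := EuclideanSpace.single i 1

/-- The quadratic form `x · S x`. -/
def quadForm (S : Matrix (Fin 3) (Fin 3) ℝ) (x : E3) : ℝ := ∑ i, ∑ j, x i * S i j * x j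

/-- The matrix-vector product `(S x) i`. -/
def mulVec3 (S : Matrix (Fin 3) (Fin 3) ℝ) (x : E3) (i : Fin 3) : ℝ := ∑ j, S i j * x j

/-- The elementary field `Φ₀ = Φ₀^S`. -/
def Phi0 (S : Matrix (Fin 3) (Fin 3) ℝ) (x : E3) (i : Fin 3) : ℝ :=
  -(5/2) * quadForm S x * x i / ‖x‖^5 - mulVec3 S x i / ‖x‖^5
    + (5/2) * quadForm S x * x i / ‖x‖^7

/-- The elementary pressure `P₀ = P₀^S`. -/
def P0 (S : Matrix (Fin 3) (Fin 3) ℝ) (x : E3) : ℝ := -5 * quadForm S x / ‖x‖^5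

/-- Symmetric gradient `D(u) = (∇u + (∇u)ᵀ)/2` of a vector field, as a 3×3 matrix. -/
def symGrad (u : E3 → Fin 3 → ℝ) (x : E3) : Matrix (Fin 3) (Fin 3) ℝ :=
  Matrix.of fun i j => (fderiv ℝ u x (e3 j) i + fderiv ℝ u x (e3 i) j) / 2

/-- Componentwise Laplacian of a vector field: `(Δu)_i = ∑_j ∂_j ∂_j u_i`. -/
def vecLap (u : E3 → Fin 3 → ℝ) (x : E3) (i : Fin 3) : ℝ :=
  ∑ j, fderiv ℝ (fun y => fderiv ℝ u y (e3 j) i) x (e3 j)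

/-- Gradient of a scalar field. -/
def sgrad (p : E3 → ℝ) (x : E3) (i : Fin 3) : ℝ := fderiv ℝ p x (e3 i)

/-- Divergence of a vector field. -/
def divg (u : E3 → Fin 3 → ℝ) (x : E3) : ℝ := ∑ i, fderiv ℝ u x (e3 i) i

/-- Newtonian stress tensor `σ(u,p) = 2 D(u) - p Id`. -/
def stressT (u : E3 → Fin 3 → ℝ) (p : E3 → ℝ) (x : E3) : Matrix (Fin 3) (Fin 3) ℝ :=
  Matrix.of fun i j => 2 * symGrad u x i j - p x * (if i = j then 1 else 0)

/-- Frobenius norm of a 3×3 matrix. -/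
def matNorm (A : Matrix (Fin 3) (Fin 3) ℝ) : ℝ := Real.sqrt (∑ i, ∑ j, (A i j)^2)

namespace StokesAux

def dl (i j : Fin 3) : ℝ := if i = j then 1 else 0

def HasPD (f : E3 → ℝ) (x : E3) (g : Fin 3 → ℝ) : Prop :=
  ∃ L : E3 →L[ℝ] ℝ, HasFDerivAt f L x ∧ ∀ j, L (e3 j) = g j

namespace HasPD

variable {f f₁ f₂ : E3 → ℝ} {x : E3} {g g₁ g₂ : Fin 3 → ℝ}

lemma differentiableAt (h : HasPD f x g) : DifferentiableAt ℝ f x := by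
  obtain ⟨L, hL, -⟩ := h; exact hL.differentiableAt

lemma fderiv_apply (h : HasPD f x g) (j : Fin 3) : fderiv ℝ f x (e3 j) = g j := by
  obtain ⟨L, hL, hg⟩ := h; rw [hL.fderiv]; exact hg j

lemma congr_g (h : HasPD f x g₁) (h' : ∀ j, g₁ j = g₂ j) : HasPD f x g₂ := by
  obtain ⟨L, hL, hg⟩ := h; exact ⟨L, hL, fun j => (hg j).trans (h' j)⟩

lemma add (h₁ : HasPD f₁ x g₁) (h₂ : HasPD f₂ x g₂) :
    HasPD (fun y => f₁ y + f₂ y) x (fun j => g₁ j + g₂ j) := by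
  obtain ⟨L₁, hL₁, hg₁⟩ := h₁; obtain ⟨L₂, hL₂, hg₂⟩ := h₂
  exact ⟨L₁ + L₂, hL₁.add hL₂, fun j => by simp [hg₁ j, hg₂ j]⟩

lemma sub (h₁ : HasPD f₁ x g₁) (h₂ : HasPD f₂ x g₂) :
    HasPD (fun y => f₁ y - f₂ y) x (fun j => g₁ j - g₂ j) := by
  obtain ⟨L₁, hL₁, hg₁⟩ := h₁; obtain ⟨L₂, hL₂, hg₂⟩ := h₂
  exact ⟨L₁ - L₂, hL₁.sub hL₂, fun j => by simp [hg₁ j, hg₂ j]⟩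

lemma mul (h₁ : HasPD f₁ x g₁) (h₂ : HasPD f₂ x g₂) :
    HasPD (fun y => f₁ y * f₂ y) x (fun j => f₁ x * g₂ j + f₂ x * g₁ j) := by
  obtain ⟨L₁, hL₁, hg₁⟩ := h₁; obtain ⟨L₂, hL₂, hg₂⟩ := h₂
  exact ⟨f₁ x • L₂ + f₂ x • L₁, hL₁.mul hL₂, fun j => by simp [hg₁ j, hg₂ j]⟩

lemma const_mul (h : HasPD f x g) (c : ℝ) :
    HasPD (fun y => c * f y) x (fun j => c * g j) := by
  obtain ⟨L, hL, hg⟩ := h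
  exact ⟨c • L, hL.const_mul c, fun j => by simp [hg j]⟩

lemma congr_fun' (h : HasPD f₁ x g) (h' : ∀ y, f₁ y = f₂ y) : HasPD f₂ x g := by
  obtain ⟨L, hL, hg⟩ := h
  exact ⟨L, hL.congr_of_eventuallyEq (Filter.Eventually.of_forall fun y => (h' y).symm), hg⟩

lemma mul_const (h : HasPD f x g) (c : ℝ) :
    HasPD (fun y => f y * c) x (fun j => g j * c) :=
  ((h.const_mul c).congr_fun' (fun y => mul_comm c (f y))).congr_g (fun j => mul_comm c (g j))

lemma pow (h : HasPD f x g) (n : ℕ) :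
    HasPD (fun y => f y ^ n) x (fun j => n * f x ^ (n - 1) * g j) := by
  obtain ⟨L, hL, hg⟩ := h
  exact ⟨(↑n * f x ^ (n - 1)) • L, (hasDerivAt_pow n (f x)).comp_hasFDerivAt x hL,
    fun j => by simp [hg j]⟩

lemma inv (h : HasPD f x g) (hfx : f x ≠ 0) :
    HasPD (fun y => (f y)⁻¹) x (fun j => -(g j) / f x ^ 2) := by
  obtain ⟨L, hL, hg⟩ := h
  refine ⟨(-(f x ^ 2)⁻¹) • L, (hasDerivAt_inv hfx).comp_hasFDerivAt x hL, fun j => by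
    simp [hg j]; field_simp⟩

lemma div (h₁ : HasPD f₁ x g₁) (h₂ : HasPD f₂ x g₂) (hfx : f₂ x ≠ 0) :
    HasPD (fun y => f₁ y / f₂ y) x
      (fun j => (g₁ j * f₂ x - f₁ x * g₂ j) / f₂ x ^ 2) := by
  have h := (h₁.mul (h₂.inv hfx)).congr_fun' (fun y => (div_eq_mul_inv (f₁ y) (f₂ y)).symm)
  exact h.congr_g fun j => by field_simp; ring

end HasPD

lemma hasPD_const (c : ℝ) (x : E3) : HasPD (fun _ => c) x (fun _ => 0) :=
  ⟨0, hasFDerivAt_const c x, fun j => rfl⟩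

lemma hasPD_coord (i : Fin 3) (x : E3) : HasPD (fun y => y i) x (fun j => dl i j) := by
  refine ⟨EuclideanSpace.proj i, ?_, fun j => ?_⟩
  · exact (EuclideanSpace.proj (𝕜 := ℝ) i).hasFDerivAt
  simp [e3, EuclideanSpace.proj, dl, EuclideanSpace.single_apply]

lemma hasPD_sum {ι : Type*} {s : Finset ι} {f : ι → E3 → ℝ} {x : E3} {g : ι → Fin 3 → ℝ}
    (h : ∀ a ∈ s, HasPD (f a) x (g a)) :
    HasPD (fun y => ∑ a ∈ s, f a y) x (fun j => ∑ a ∈ s, g a j) := by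
  refine ⟨∑ a ∈ s, fderiv ℝ (f a) x, HasFDerivAt.fun_sum fun a ha =>
    ((h a ha).differentiableAt).hasFDerivAt, fun j => ?_⟩
  rw [ContinuousLinearMap.sum_apply]
  exact Finset.sum_congr rfl fun a ha => (h a ha).fderiv_apply j

end StokesAux

namespace StokesAux

lemma norm_eq_sqrt (y : E3) : ‖y‖ = Real.sqrt (∑ i, (y i)^2) := by
  rw [EuclideanSpace.norm_eq]
  congr 1
  exact Finset.sum_congr rfl fun i _ => by rw [Real.norm_eq_abs, sq_abs]

lemma norm_sq_eq (y : E3) : ‖y‖ ^ 2 = ∑ i, (y i)^2 := by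
  rw [norm_eq_sqrt, Real.sq_sqrt (by positivity)]

lemma hasPD_sumsq (x : E3) : HasPD (fun y : E3 => ∑ i, (y i)^2) x (fun j => 2 * x j) := by
  have h := hasPD_sum (s := Finset.univ) (f := fun i (y : E3) => (y i)^2)
    (g := fun i j => 2 * x i ^ (2-1) * dl i j) (fun a _ => (hasPD_coord a x).pow 2)
  refine h.congr_g fun j => ?_
  simp [dl, mul_ite, Finset.sum_ite_eq', pow_one]

lemma hasPD_norm {x : E3} (hx : x ≠ 0) : HasPD (fun y : E3 => ‖y‖) x (fun j => x j / ‖x‖) := by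
  have hnx : ‖x‖ ≠ 0 := norm_ne_zero_iff.2 hx
  have hsx : (∑ i, (x i)^2) ≠ 0 := by rw [← norm_sq_eq]; positivity
  obtain ⟨L, hL, hg⟩ := hasPD_sumsq x
  refine ⟨(1 / (2 * Real.sqrt (∑ i, (x i)^2))) • L, ?_, fun j => ?_⟩
  · have := hL.sqrt hsx
    exact this.congr_of_eventuallyEq (Filter.Eventually.of_forall fun y => (norm_eq_sqrt y))
  · rw [← norm_eq_sqrt]
    simp [hg j]
    field_simp

lemma hasPD_normpow {x : E3} (hx : x ≠ 0) (n : ℕ) :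
    HasPD (fun y : E3 => ‖y‖ ^ n) x (fun j => n * ‖x‖ ^ (n-1) * (x j / ‖x‖)) :=
  (hasPD_norm hx).pow n

lemma hasPD_mulVec3 (S : Matrix (Fin 3) (Fin 3) ℝ) (i : Fin 3) (x : E3) :
    HasPD (fun y => mulVec3 S y i) x (fun j => S i j) := by
  have h := hasPD_sum (s := Finset.univ) (f := fun b (y : E3) => S i b * y b)
    (g := fun b j => S i b * dl b j) (fun b _ => (hasPD_coord b x).const_mul (S i b))
  refine (h.congr_fun' fun y => rfl).congr_g fun j => ?_
  simp [dl, mul_ite, Finset.sum_ite_eq', Finset.sum_ite_eq]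

lemma hasPD_quadForm {S : Matrix (Fin 3) (Fin 3) ℝ} (hS : S.IsSymm) (x : E3) :
    HasPD (quadForm S) x (fun j => 2 * mulVec3 S x j) := by
  have hterm : ∀ a b : Fin 3, HasPD (fun y : E3 => y a * S a b * y b) x
      (fun j => (x a * S a b) * dl b j + x b * (dl a j * S a b)) := fun a b =>
    ((hasPD_coord a x).mul_const (S a b)).mul (hasPD_coord b x)
  have h := hasPD_sum (s := Finset.univ) (f := fun a (y : E3) => ∑ b, y a * S a b * y b)
    (g := fun a j => ∑ b, ((x a * S a b) * dl b j + x b * (dl a j * S a b)))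
    (fun a _ => hasPD_sum (fun b _ => hterm a b))
  refine (h.congr_fun' fun y => rfl).congr_g fun j => ?_
  have hsymm : ∀ a b, S a b = S b a := fun a b => by
    conv_lhs => rw [← hS]
    rfl
  simp only [Finset.sum_add_distrib, dl, mul_ite, ite_mul, mul_one, mul_zero, one_mul,
    zero_mul, Finset.sum_ite_eq', Finset.sum_ite_eq, Finset.mem_univ, if_true]
  rw [mulVec3, two_mul]
  have h2 : (∑ a : Fin 3, ∑ b : Fin 3, if a = j then x b * S a b else 0)
      = ∑ b : Fin 3, x b * S j b := by
    rw [Finset.sum_comm]; simp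
  rw [h2]
  congr 1
  · exact Finset.sum_congr rfl fun a _ => by rw [hsymm a j]; ring
  · exact Finset.sum_congr rfl fun a _ => by ring

end StokesAux

namespace StokesAux

def G (S : Matrix (Fin 3) (Fin 3) ℝ) (i j : Fin 3) (y : E3) : ℝ :=
  (-5 * mulVec3 S y j * y i - 5/2 * quadForm S y * dl i j - S i j) / ‖y‖^5
  + (25/2 * quadForm S y * y i * y j + 5 * mulVec3 S y i * y j + 5 * mulVec3 S y j * y i
      + 5/2 * quadForm S y * dl i j) / ‖y‖^7
  - 35/2 * quadForm S y * y i * y j / ‖y‖^9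

lemma hasPD_Phi0 {S : Matrix (Fin 3) (Fin 3) ℝ} (hS : S.IsSymm) {y : E3} (hy : y ≠ 0)
    (i : Fin 3) : HasPD (fun z => Phi0 S z i) y (fun j => G S i j y) := by
  have hn : ‖y‖ ≠ 0 := norm_ne_zero_iff.2 hy
  have h5 : ‖y‖^5 ≠ 0 := pow_ne_zero _ hn
  have h7 : ‖y‖^7 ≠ 0 := pow_ne_zero _ hn
  have hq := hasPD_quadForm hS y
  have t1 := ((hq.const_mul (-(5/2))).mul (hasPD_coord i y)).div (hasPD_normpow hy 5) h5
  have t2 := (hasPD_mulVec3 S i y).div (hasPD_normpow hy 5) h5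
  have t3 := ((hq.const_mul (5/2)).mul (hasPD_coord i y)).div (hasPD_normpow hy 7) h7
  refine (((t1.sub t2).add t3).congr_fun' fun z => rfl).congr_g fun j => ?_
  unfold G
  field_simp
  ring

lemma fderiv_Phi0_apply {S : Matrix (Fin 3) (Fin 3) ℝ} (hS : S.IsSymm) {y : E3} (hy : y ≠ 0)
    (j i : Fin 3) : fderiv ℝ (Phi0 S) y (e3 j) i = G S i j y := by
  have hd : ∀ k, DifferentiableAt ℝ (fun z => Phi0 S z k) y := fun k =>
    (hasPD_Phi0 hS hy k).differentiableAt
  rw [show fderiv ℝ (Phi0 S) y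
      = ContinuousLinearMap.pi (fun k => fderiv ℝ (fun z => Phi0 S z k) y) from fderiv_pi hd]
  rw [ContinuousLinearMap.pi_apply]
  exact (hasPD_Phi0 hS hy i).fderiv_apply j

lemma hasPD_P0 {S : Matrix (Fin 3) (Fin 3) ℝ} (hS : S.IsSymm) {x : E3} (hx : x ≠ 0) :
    HasPD (P0 S) x
      (fun i => -10 * mulVec3 S x i / ‖x‖^5 + 25 * quadForm S x * x i / ‖x‖^7) := by
  have hn : ‖x‖ ≠ 0 := norm_ne_zero_iff.2 hx
  have h5 : ‖x‖^5 ≠ 0 := pow_ne_zero _ hn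
  have h := ((hasPD_quadForm hS x).const_mul (-5)).div (hasPD_normpow hx 5) h5
  refine (h.congr_fun' fun z => rfl).congr_g fun j => ?_
  field_simp
  ring

def w (S : Matrix (Fin 3) (Fin 3) ℝ) (x : E3) (j : Fin 3) : ℝ :=
  -10 * mulVec3 S x j / ‖x‖^5 + 25 * quadForm S x * x j / ‖x‖^7
    + 10 * mulVec3 S x j / ‖x‖^7 - 35 * quadForm S x * x j / ‖x‖^9

def Ee (S : Matrix (Fin 3) (Fin 3) ℝ) (i j : Fin 3) (x : E3) : ℝ :=
  S j j * (-5 * x i / ‖x‖^5 + 5 * x i / ‖x‖^7)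
  + (mulVec3 S x j * x j) * (50 * x i / ‖x‖^7 - 70 * x i / ‖x‖^9)
  + (x j * x j) * (-(175/2) * quadForm S x * x i / ‖x‖^9 - 35 * mulVec3 S x i / ‖x‖^9
       + (315/2) * quadForm S x * x i / ‖x‖^11)
  + (S i j * x j) * (10 / ‖x‖^7)
  + (if i = j then w S x j else 0)
  + ((25/2) * quadForm S x * x i / ‖x‖^7 + 5 * mulVec3 S x i / ‖x‖^7
       - (35/2) * quadForm S x * x i / ‖x‖^9)

set_option maxHeartbeats 4000000 in
lemma fderiv_G {S : Matrix (Fin 3) (Fin 3) ℝ} (hS : S.IsSymm) {x : E3} (hx : x ≠ 0)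
    (i j : Fin 3) : fderiv ℝ (G S i j) x (e3 j) = Ee S i j x := by
  have hn : ‖x‖ ≠ 0 := norm_ne_zero_iff.2 hx
  have h5 : ‖x‖^5 ≠ 0 := pow_ne_zero _ hn
  have h7 : ‖x‖^7 ≠ 0 := pow_ne_zero _ hn
  have h9 : ‖x‖^9 ≠ 0 := pow_ne_zero _ hn
  have hq := hasPD_quadForm hS x
  have A1 := ((hasPD_mulVec3 S j x).const_mul (-5)).mul (hasPD_coord i x)
  have A2 := (hq.const_mul (5/2)).mul_const (dl i j)
  have T1 := ((A1.sub A2).sub (hasPD_const (S i j) x)).div (hasPD_normpow hx 5) h5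
  have B1 := ((hq.const_mul (25/2)).mul (hasPD_coord i x)).mul (hasPD_coord j x)
  have B2 := ((hasPD_mulVec3 S i x).const_mul 5).mul (hasPD_coord j x)
  have B3 := ((hasPD_mulVec3 S j x).const_mul 5).mul (hasPD_coord i x)
  have B4 := (hq.const_mul (5/2)).mul_const (dl i j)
  have T2 := (((B1.add B2).add B3).add B4).div (hasPD_normpow hx 7) h7
  have T3 := (((hq.const_mul (35/2)).mul (hasPD_coord i x)).mul (hasPD_coord j x)).div
    (hasPD_normpow hx 9) h9
  have h : HasPD (G S i j) x _ := ((T1.add T2).sub T3).congr_fun' fun z => rfl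
  rw [h.fderiv_apply j]
  rcases eq_or_ne i j with rfl | hij
  · simp only [Ee, w, dl, if_pos rfl, eq_self_iff_true, if_true]
    field_simp
    ring
  · simp only [Ee, w, dl, if_neg hij, eq_self_iff_true, if_true]
    field_simp
    ring

end StokesAux

namespace StokesAux

variable {S : Matrix (Fin 3) (Fin 3) ℝ} {x : E3}

lemma sum_diag (hStr : S.trace = 0) : ∑ j : Fin 3, S j j = 0 := by
  simpa [Matrix.trace, Matrix.diag] using hStr

lemma sum_mx (S : Matrix (Fin 3) (Fin 3) ℝ) (x : E3) :
    ∑ j : Fin 3, mulVec3 S x j * x j = quadForm S x := by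
  rw [quadForm]
  refine Finset.sum_congr rfl fun a _ => ?_
  rw [mulVec3, Finset.sum_mul]
  exact Finset.sum_congr rfl fun b _ => by ring

lemma sum_xx (x : E3) : ∑ j : Fin 3, x j * x j = ‖x‖^2 := by
  rw [norm_sq_eq]
  exact Finset.sum_congr rfl fun j _ => (sq (x j)).symm ▸ by ring

lemma sum_Ee (hStr : S.trace = 0) (hx : x ≠ 0) (i : Fin 3) :
    ∑ j : Fin 3, Ee S i j x
      = -10 * mulVec3 S x i / ‖x‖^5 + 25 * quadForm S x * x i / ‖x‖^7 := by
  have hn : ‖x‖ ≠ 0 := norm_ne_zero_iff.2 hx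
  have hmi : ∑ j : Fin 3, S i j * x j = mulVec3 S x i := rfl
  simp only [Ee, Finset.sum_add_distrib, ← Finset.sum_mul]
  rw [sum_diag hStr, sum_mx, sum_xx, hmi, Finset.sum_ite_eq, Finset.sum_const]
  simp only [Finset.mem_univ, if_true, Finset.card_univ, Fintype.card_fin, nsmul_eq_mul, w]
  field_simp
  ring

lemma sum_G_diag (hS : S.IsSymm) (hStr : S.trace = 0) (hx : x ≠ 0) :
    ∑ i : Fin 3, G S i i x = 0 := by
  have hn : ‖x‖ ≠ 0 := norm_ne_zero_iff.2 hx
  have hsplit : ∀ i : Fin 3, G S i i x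
      = S i i * (-(1 / ‖x‖^5))
        + (mulVec3 S x i * x i) * (-5 / ‖x‖^5 + 10 / ‖x‖^7)
        + (x i * x i) * ((25/2) * quadForm S x / ‖x‖^7 - (35/2) * quadForm S x / ‖x‖^9)
        + (-(5/2) * quadForm S x / ‖x‖^5 + (5/2) * quadForm S x / ‖x‖^7) := by
    intro i
    simp only [G, dl, if_pos rfl, eq_self_iff_true, if_true]
    field_simp
    ring
  rw [Finset.sum_congr rfl fun i _ => hsplit i]
  simp only [Finset.sum_add_distrib, ← Finset.sum_mul]
  rw [sum_diag hStr, sum_mx, sum_xx, Finset.sum_const]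
  simp only [Finset.card_univ, Fintype.card_fin, nsmul_eq_mul, Finset.sum_const]
  field_simp
  ring

end StokesAux

open StokesAux in
/-- **(Φ₀, P₀) solves the homogeneous Stokes equations on ℝ³∖{0}**:
for every `x ≠ 0`, `ΔΦ₀(x) = ∇P₀(x)` componentwise and `div Φ₀(x) = 0`. -/
theorem Phi0_P0_solve_stokes (S : Matrix (Fin 3) (Fin 3) ℝ)
    (hSsym : S.IsSymm) (hStr : S.trace = 0) :
    ∀ x : E3, x ≠ 0 →
      (∀ i, vecLap (Phi0 S) x i = sgrad (P0 S) x i) ∧ divg (Phi0 S) x = 0 := by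
  intro x hx
  constructor
  · intro i
    have hE : ∀ j : Fin 3,
        fderiv ℝ (fun y => fderiv ℝ (Phi0 S) y (e3 j) i) x (e3 j) = Ee S i j x := by
      intro j
      have hmem : {y : E3 | y ≠ 0} ∈ nhds x := by
        have ho : IsOpen {y : E3 | y ≠ 0} := isOpen_compl_singleton
        exact ho.mem_nhds hx
      have heq : (fun y => fderiv ℝ (Phi0 S) y (e3 j) i) =ᶠ[nhds x] G S i j :=
        Filter.eventuallyEq_of_mem hmem fun y hy => fderiv_Phi0_apply hSsym hy j i
      rw [heq.fderiv_eq, fderiv_G hSsym hx i j]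
    rw [vecLap, Finset.sum_congr rfl fun j _ => hE j, sum_Ee hStr hx i,
      sgrad, (hasPD_P0 hSsym hx).fderiv_apply i]
  · rw [divg, Finset.sum_congr rfl fun i _ => fderiv_Phi0_apply hSsym hx i i]
    exact sum_G_diag hSsym hStr hx
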